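/- Let G be a finite group and M ≤ G a subgroup such that p divides |M : M ∩ M^x| for every x ∈ G \ M (p prime). Then |G : M| ≡ 1 (mod p). (The index |G:M| is the sum over double cosets MxM of |M : M ∩ M^x|, and the only double coset contributing 1 is M itself.) -/

import Mathlib

open Pointwise MulAction

lemma orbit_card_eq {G : Type*} [Group G] [Fintype G] (M : Subgroup G) (x : G) :
    Nat.card (orbit M ((x : G ⧸ M))) = (MulAut.conj x • M).relIndex M := by
  have hst : stabilizer M ((x : G ⧸ M)) = (MulAut.conj x • M).subgroupOf M := by
    ext m
    simp only [mem_stabilizer_iff, Subgroup.mem_subgroupOf,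
      Subgroup.mem_pointwise_smul_iff_inv_smul_mem]
    change (((m : G) * x : G) : G ⧸ M) = (x : G ⧸ M) ↔ _
    rw [QuotientGroup.eq]
    constructor
    · intro hh
      have := M.inv_mem hh
      simpa [MulAut.conj, mul_assoc] using this
    · intro hh
      have : x⁻¹ * (m : G) * x ∈ M := by simpa [MulAut.conj, mul_assoc] using hh
      have := M.inv_mem this
      simpa [mul_assoc] using this
  rw [Nat.card_congr (orbitEquivQuotientStabilizer M ((x : G ⧸ M))), hst]
  rfl

/-- If `M ≤ G` satisfies `p ∣ |M : M ∩ M^x|` for every `x ∉ M`, then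
`|G : M| ≡ 1 (mod p)`. -/
theorem stmt19 {G : Type*} [Group G] [Fintype G] (p : ℕ) [Fact p.Prime]
    (M : Subgroup G)
    (h : ∀ x : G, x ∉ M → p ∣ (MulAut.conj x⁻¹ • M).relIndex M) :
    M.index ≡ 1 [MOD p] := by
  classical
  have key : ∀ x : G, x ∉ M → p ∣ Nat.card (orbit M ((x : G ⧸ M))) := by
    intro x hx
    rw [orbit_card_eq]
    have hx' : x⁻¹ ∉ M := fun hm => hx (by simpa using M.inv_mem hm)
    simpa using h x⁻¹ hx'
  have one_card : Nat.card (orbit M (((1 : G) : G ⧸ M))) = 1 := by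
    rw [orbit_card_eq]
    simp [Subgroup.relIndex_self]
  haveI : Fintype (G ⧸ M) := Fintype.ofFinite _
  set Ω := orbitRel.Quotient M (G ⧸ M) with hΩ
  haveI : Fintype Ω := Fintype.ofFinite _
  haveI : ∀ ω : Ω, Fintype (orbit M (ω.out : G ⧸ M)) := fun ω => Fintype.ofFinite _
  set f : Ω → ℕ := fun ω => Nat.card (orbit M ω.out) with hf
  have hcard : M.index = ∑ ω : Ω, f ω := by
    rw [Subgroup.index, Nat.card_eq_fintype_card,
      Fintype.card_congr (selfEquivSigmaOrbits M (G ⧸ M)), Fintype.card_sigma]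
    exact Finset.sum_congr rfl fun ω _ => by simp only [hf, Nat.card_eq_fintype_card]
  set ω₀ : Ω := Quotient.mk'' (((1 : G) : G ⧸ M)) with hω₀
  -- every ω's out is mk of some x, and mk'' of it recovers ω
  have hrep : ∀ ω : Ω, ∃ x : G, (x : G ⧸ M) = ω.out := fun ω =>
    QuotientGroup.mk_surjective ω.out
  have hmem : ∀ x : G, x ∈ M → ((x : G ⧸ M)) = (((1 : G) : G ⧸ M)) := by
    intro x hx
    rw [QuotientGroup.eq]
    simpa using M.inv_mem hx
  have h1 : f ω₀ = 1 := by
    obtain ⟨x, hx⟩ := hrep ω₀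
    have hx2 : Quotient.mk'' ((x : G ⧸ M)) = ω₀ := by rw [hx]; exact Quotient.out_eq' _
    rw [hω₀] at hx2
    have : ((x : G ⧸ M)) ∈ orbit M (((1 : G) : G ⧸ M)) := Quotient.exact' hx2
    obtain ⟨m, hm⟩ := this
    have hxM : x ∈ M := by
      have : (((m : G) * 1 : G) : G ⧸ M) = (x : G ⧸ M) := hm
      rw [mul_one, QuotientGroup.eq] at this
      simpa using M.mul_mem m.2 this
    rw [hf]
    simp only
    rw [← hx, hmem x hxM, one_card]
  have h2 : ∀ ω : Ω, ω ≠ ω₀ → p ∣ f ω := by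
    intro ω hne
    obtain ⟨x, hx⟩ := hrep ω
    have hxM : x ∉ M := by
      intro hxm
      apply hne
      have hx2 : Quotient.mk'' ((x : G ⧸ M)) = ω := by rw [hx]; exact Quotient.out_eq' ω
      rw [← hx2, hmem x hxm, hω₀]
    rw [hf]
    simp only
    rw [← hx]
    exact key x hxM
  rw [hcard, ← Finset.add_sum_erase _ f (Finset.mem_univ ω₀), h1]
  have hdvd : p ∣ ∑ ω ∈ Finset.univ.erase ω₀, f ω :=
    Finset.dvd_sum fun ω hω => h2 ω (Finset.ne_of_mem_erase hω)
  calc 1 + ∑ ω ∈ Finset.univ.erase ω₀, f ω ≡ 1 + 0 [MOD p] :=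
        Nat.ModEq.add_left 1 ((Nat.modEq_zero_iff_dvd).mpr hdvd)
    _ = 1 := by ring
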